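/- Let f : X → ℂ be a measurable function on a finite measure space satisfying μ({x : |f(x) - z|² ≤ t}) ≤ C t^κ for all t ∈ (0, t_0], uniformly in z ∈ ℂ, for some κ ∈ (0,1]. Then for every z ∈ ℂ, the function x ↦ log|f(x) - z| is integrable on X, and ∫_X |log|f(x) - z|| dμ(x) is bounded uniformly for z in any compact subset of ℂ. -/

import Mathlib

open MeasureTheory

/-- If `f` is a bounded measurable function on a finite measure space with the uniform
sublevel-set bound `μ{|f - z|² ≤ t} ≤ C t^κ` for `t ∈ (0, t₀]` and all `z ∈ ℂ`, then
`x ↦ log|f(x) - z|` is integrable for every `z`, and `∫ |log|f - z|| dμ` is bounded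
uniformly for `z` in any compact subset of `ℂ`. -/
theorem stmt19 {X : Type*} [MeasurableSpace X] (μ : Measure X) [IsFiniteMeasure μ]
    (f : X → ℂ) (hf : Measurable f) (B : ℝ) (hfB : ∀ x, ‖f x‖ ≤ B)
    (κ C t₀ : ℝ) (hκ : κ ∈ Set.Ioc (0:ℝ) 1) (hC : 0 < C) (ht₀ : 0 < t₀)
    (hsub : ∀ z : ℂ, ∀ t : ℝ, 0 < t → t ≤ t₀ →
      μ {x | ‖f x - z‖ ^ 2 ≤ t} ≤ ENNReal.ofReal (C * t ^ κ)) :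
    (∀ z : ℂ, Integrable (fun x => Real.log (‖f x - z‖)) μ) ∧
    (∀ K : Set ℂ, IsCompact K → ∃ M : ℝ, ∀ z ∈ K,
      ∫ x, |Real.log (‖f x - z‖)| ∂μ ≤ M) := by
  obtain ⟨hκ0, hκ1⟩ := hκ
  set A := (μ Set.univ).toReal with hA
  have hA0 : 0 ≤ A := ENNReal.toReal_nonneg
  set t₁ := min t₀ 1 with ht₁def
  have ht₁0 : 0 < t₁ := lt_min ht₀ one_pos
  have ht₁κ : (0:ℝ) < t₁ ^ κ := Real.rpow_pos_of_pos ht₁0 κ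
  set C₁ := max C (A / t₁ ^ κ) with hC₁def
  have hC₁0 : 0 < C₁ := lt_max_of_lt_left hC
  -- key sublevel bound for s ∈ (0,1]
  have hkey : ∀ z : ℂ, ∀ s : ℝ, 0 < s → s ≤ 1 →
      μ {x | ‖f x - z‖ ^ 2 ≤ s} ≤ ENNReal.ofReal (C₁ * s ^ κ) := by
    intro z s hs0 hs1
    by_cases hst : s ≤ t₀
    · refine (hsub z s hs0 hst).trans (ENNReal.ofReal_le_ofReal ?_)
      have hsκ : (0:ℝ) ≤ s ^ κ := Real.rpow_nonneg hs0.le κ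
      have := le_max_left C (A / t₁ ^ κ)
      nlinarith
    · push_neg at hst
      have h1 : μ {x | ‖f x - z‖ ^ 2 ≤ s} ≤ μ Set.univ :=
        measure_mono (Set.subset_univ _)
      have h2 : μ Set.univ = ENNReal.ofReal A :=
        (ENNReal.ofReal_toReal (measure_ne_top μ _)).symm
      refine (h1.trans_eq h2).trans (ENNReal.ofReal_le_ofReal ?_)
      have hsκ : t₁ ^ κ ≤ s ^ κ :=
        Real.rpow_le_rpow ht₁0.le ((min_le_left _ _).trans hst.le) hκ0.le
      have hC₁2 : A / t₁ ^ κ ≤ C₁ := le_max_right _ _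
      calc A = (A / t₁ ^ κ) * t₁ ^ κ := by field_simp
        _ ≤ C₁ * s ^ κ := mul_le_mul hC₁2 hsκ ht₁κ.le hC₁0.le
  have hmeaslog : ∀ z : ℂ, Measurable fun x => Real.log (‖f x - z‖) := fun z =>
    Real.measurable_log.comp (continuous_norm.measurable.comp (hf.sub measurable_const))
  set M₀ := ∫ t in Set.Ioi (0:ℝ), C₁ * Real.exp (-(2*κ) * t) with hM₀def
  have hexpint : IntegrableOn (fun t => C₁ * Real.exp (-(2*κ) * t)) (Set.Ioi (0:ℝ)) :=
    (exp_neg_integrableOn_Ioi 0 (by positivity : (0:ℝ) < 2*κ)).const_mul C₁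
  have hM₀0 : 0 ≤ M₀ := integral_nonneg fun t => by positivity
  -- negative part bound, uniform in z
  have hNkey : ∀ z : ℂ,
      ∫⁻ x, ENNReal.ofReal (max 0 (-Real.log (‖f x - z‖))) ∂μ
        ≤ ENNReal.ofReal M₀ := by
    intro z
    have hNm : Measurable fun x => max 0 (-Real.log (‖f x - z‖)) :=
      measurable_const.max (hmeaslog z).neg
    have hnn : 0 ≤ᵐ[μ] fun x => max (0:ℝ) (-Real.log (‖f x - z‖)) :=
      Filter.Eventually.of_forall fun x => le_max_left _ _
    rw [lintegral_eq_lintegral_meas_lt μ hnn hNm.aemeasurable]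
    have hstep : ∀ t ∈ Set.Ioi (0:ℝ),
        μ {a | t < max 0 (-Real.log (‖f a - z‖))}
          ≤ ENNReal.ofReal (C₁ * Real.exp (-(2*κ) * t)) := by
      intro t ht
      have ht : (0:ℝ) < t := ht
      have hsub1 : {a | t < max 0 (-Real.log (‖f a - z‖))} ⊆
          {x | ‖f x - z‖ ^ 2 ≤ Real.exp (-(2*t))} := by
        intro a ha
        simp only [Set.mem_setOf_eq] at ha ⊢
        have hlog : Real.log (‖f a - z‖) < -t := by
          rcases lt_max_iff.mp ha with h | h
          · linarith
          · linarith
        have hr0 : 0 ≤ ‖f a - z‖ := norm_nonneg _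
        have hrle : ‖f a - z‖ ≤ Real.exp (-t) := by
          rcases eq_or_lt_of_le hr0 with h0 | h0
          · rw [← h0]; exact (Real.exp_pos _).le
          · calc ‖f a - z‖ = Real.exp (Real.log (‖f a - z‖)) :=
                (Real.exp_log h0).symm
              _ ≤ Real.exp (-t) := Real.exp_le_exp.mpr hlog.le
        calc ‖f a - z‖ ^ 2 ≤ Real.exp (-t) ^ 2 := by nlinarith
          _ = Real.exp (-(2*t)) := by
              rw [sq, ← Real.exp_add]; ring_nf
      have hrw : (Real.exp (-(2*t))) ^ κ = Real.exp (-(2*κ) * t) := by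
        rw [Real.rpow_def_of_pos (Real.exp_pos _), Real.log_exp]
        congr 1; ring
      refine (measure_mono hsub1).trans ?_
      have := hkey z (Real.exp (-(2*t))) (Real.exp_pos _)
        (Real.exp_le_one_iff.mpr (by linarith))
      rwa [hrw] at this
    calc ∫⁻ t in Set.Ioi (0:ℝ), μ {a | t < max 0 (-Real.log (‖f a - z‖))}
        ≤ ∫⁻ t in Set.Ioi (0:ℝ), ENNReal.ofReal (C₁ * Real.exp (-(2*κ) * t)) :=
          setLIntegral_mono
            (ENNReal.measurable_ofReal.comp
              ((Real.measurable_exp.comp (measurable_id.const_mul (-(2*κ)))).const_mul C₁)) hstep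
      _ = ENNReal.ofReal M₀ :=
          (ofReal_integral_eq_lintegral_ofReal hexpint
            (Filter.Eventually.of_forall fun t => by positivity)).symm
  -- main per-z estimate
  have main : ∀ z : ℂ, Integrable (fun x => Real.log (‖f x - z‖)) μ ∧
      ∫ x, |Real.log (‖f x - z‖)| ∂μ
        ≤ Real.log (max B 0 + ‖z‖ + 1) * A + M₀ := by
    intro z
    set L := Real.log (max B 0 + ‖z‖ + 1) with hL
    have hz0 : 0 ≤ ‖z‖ := norm_nonneg _
    have hbase1 : (1:ℝ) ≤ max B 0 + ‖z‖ + 1 := by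
      have := le_max_right B 0; linarith
    have hL0 : 0 ≤ L := Real.log_nonneg hbase1
    have hpt : ∀ x, |Real.log (‖f x - z‖)|
        ≤ L + max 0 (-Real.log (‖f x - z‖)) := by
      intro x
      set r := ‖f x - z‖ with hr
      have hr0 : 0 ≤ r := norm_nonneg _
      have hrle : r ≤ max B 0 + ‖z‖ + 1 := by
        have h1 : ‖f x - z‖ ≤ ‖f x‖ + ‖z‖ := by
          simpa using norm_sub_le (f x) z
        have h2 := hfB x
        have h3 := le_max_left B 0
        simp only [← hr] at h1
        linarith
      have hlogle : Real.log r ≤ L := by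
        rcases eq_or_lt_of_le hr0 with h0 | h0
        · rw [← h0, Real.log_zero]; exact hL0
        · exact Real.log_le_log h0 hrle
      have h2 := le_max_right (0:ℝ) (-Real.log r)
      have h3 := le_max_left (0:ℝ) (-Real.log r)
      rw [abs_le]; constructor <;> linarith
    have hNmeas : Measurable (fun x => max 0 (-Real.log (‖f x - z‖))) :=
      measurable_const.max (hmeaslog z).neg
    have hnn : 0 ≤ᵐ[μ] fun x => max (0:ℝ) (-Real.log (‖f x - z‖)) :=
      Filter.Eventually.of_forall fun x => le_max_left _ _
    have hNint : Integrable (fun x => max 0 (-Real.log (‖f x - z‖))) μ := by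
      refine ⟨hNmeas.aestronglyMeasurable, ?_⟩
      rw [hasFiniteIntegral_iff_ofReal hnn]
      exact lt_of_le_of_lt (hNkey z) ENNReal.ofReal_lt_top
    have hNval : ∫ x, max 0 (-Real.log (‖f x - z‖)) ∂μ ≤ M₀ := by
      rw [integral_eq_lintegral_of_nonneg_ae hnn hNmeas.aestronglyMeasurable]
      exact ENNReal.toReal_le_of_le_ofReal hM₀0 (hNkey z)
    have hgint : Integrable (fun x => Real.log (‖f x - z‖)) μ := by
      refine Integrable.mono' ((integrable_const L).add hNint)
        (hmeaslog z).aestronglyMeasurable ?_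
      exact Filter.Eventually.of_forall fun x => by
        simpa [Real.norm_eq_abs] using hpt x
    refine ⟨hgint, ?_⟩
    calc ∫ x, |Real.log (‖f x - z‖)| ∂μ
        ≤ ∫ x, (L + max 0 (-Real.log (‖f x - z‖))) ∂μ :=
          integral_mono hgint.abs ((integrable_const L).add hNint) hpt
      _ = L * A + ∫ x, max 0 (-Real.log (‖f x - z‖)) ∂μ := by
          rw [integral_add (integrable_const L) hNint, integral_const, smul_eq_mul, mul_comm]; rfl
      _ ≤ L * A + M₀ := by linarith
  refine ⟨fun z => (main z).1, ?_⟩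
  intro K hK
  obtain ⟨R, hR⟩ := hK.isBounded.subset_closedBall 0
  refine ⟨Real.log (max B 0 + R + 1) * A + M₀, fun z hz => ?_⟩
  have hzR : ‖z‖ ≤ R := by
    have := hR hz
    simpa using mem_closedBall_zero_iff.mp this
  have hz0 : 0 ≤ ‖z‖ := norm_nonneg _
  have hLle : Real.log (max B 0 + ‖z‖ + 1) ≤ Real.log (max B 0 + R + 1) := by
    apply Real.log_le_log (by have := le_max_right B 0; linarith)
    linarith
  have := (main z).2
  have hmul : Real.log (max B 0 + ‖z‖ + 1) * A ≤ Real.log (max B 0 + R + 1) * A :=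
    mul_le_mul_of_nonneg_right hLle hA0
  linarith
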